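/- arXiv:math/9809167 — 3 statements merged into one kernel-verified Lean document; each statement's English description precedes it below -/
import Mathlib

section
/- Let V be a finite-dimensional real inner product space with inner product g₀, ω a nondegenerate alternating bilinear form, A the endomorphism with g₀(A x, y) = ω(x, y), B the unique positive-definite self-adjoint square root of -A², and J = B⁻¹ ∘ A. Then J² = -Id. -/
open LinearMap

-- trace of an endomorphism as sum of inner products over an orthonormal basis
lemma trace_eq_sum_inner' {V : Type*} [NormedAddCommGroup V] [InnerProductSpace ℝ V]
    [FiniteDimensional ℝ V] {ι : Type*} [Fintype ι] [DecidableEq ι]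
    (b : OrthonormalBasis ι ℝ V) (M : V →ₗ[ℝ] V) :
    LinearMap.trace ℝ V M = ∑ i, (inner ℝ (b i) (M (b i)) : ℝ) := by
  rw [LinearMap.trace_eq_matrix_trace ℝ b.toBasis M, Matrix.trace]
  congr 1
  ext i
  rw [Matrix.diag_apply, LinearMap.toMatrix_apply, OrthonormalBasis.coe_toBasis,
    OrthonormalBasis.coe_toBasis_repr_apply, OrthonormalBasis.repr_apply_apply]

theorem gromov_J_squared_eq_neg_id
    (V : Type*) [NormedAddCommGroup V] [InnerProductSpace ℝ V] [FiniteDimensional ℝ V]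
    (ω : V →ₗ[ℝ] V →ₗ[ℝ] ℝ)
    (hskew : ∀ x y, ω x y = - ω y x)
    (hnd : ∀ x, (∀ y, ω x y = 0) → x = 0)
    (A B J : V →ₗ[ℝ] V)
    (hA : ∀ x y, (inner ℝ (A x) y : ℝ) = ω x y)
    (hBsa : ∀ x y, (inner ℝ (B x) y : ℝ) = (inner ℝ x (B y) : ℝ))
    (hBpos : ∀ x : V, x ≠ 0 → 0 < (inner ℝ (B x) x : ℝ))
    (hB2 : B ∘ₗ B = -(A ∘ₗ A))
    (hJ : B ∘ₗ J = A) :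
    J ∘ₗ J = -LinearMap.id := by
  -- A is skew-adjoint
  have hAskew : ∀ x y : V, (inner ℝ (A x) y : ℝ) = -(inner ℝ x (A y) : ℝ) := by
    intro x y
    rw [hA, hskew, ← hA, real_inner_comm]
  -- B is injective
  have hBinj : ∀ x : V, B x = 0 → x = 0 := by
    intro x hx
    by_contra hne
    have := hBpos x hne
    rw [hx] at this
    simp at this
  -- A commutes with B ∘ B
  have hAB2 : A ∘ₗ (B ∘ₗ B) = (B ∘ₗ B) ∘ₗ A := by
    rw [hB2]; ext x; simp
  -- C := A B - B A
  set C : V →ₗ[ℝ] V := A ∘ₗ B - B ∘ₗ A with hC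
  -- C is symmetric
  have hCsym : ∀ x y : V, (inner ℝ (C x) y : ℝ) = (inner ℝ x (C y) : ℝ) := by
    intro x y
    simp only [hC, LinearMap.sub_apply, comp_apply, inner_sub_left, inner_sub_right]
    rw [hAskew (B x) y, ← hBsa x (A y), hBsa (A x) y, hAskew x (B y)]
    ring
  -- B C = - C B
  have hBC : B ∘ₗ C = -(C ∘ₗ B) := by
    have h := hAB2
    ext x
    have hx := congrArg (fun f => f x) h
    simp only [comp_apply] at hx
    simp only [hC, comp_apply, LinearMap.neg_apply, LinearMap.sub_apply, comp_apply, map_sub]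
    rw [← hx]; abel
  -- trace of C B C is 0
  have htr : LinearMap.trace ℝ V (C ∘ₗ B ∘ₗ C) = 0 := by
    have h1 : C ∘ₗ B ∘ₗ C = -((C ∘ₗ C) ∘ₗ B) := by
      ext x
      have hx := congrArg (fun f => f (B x)) hBC
      simp only [comp_apply, LinearMap.neg_apply] at hx ⊢
      have hx2 := congrArg (fun f => f x) hBC
      simp only [comp_apply, LinearMap.neg_apply] at hx2
      rw [hx2]; simp
    have h2 : LinearMap.trace ℝ V ((C ∘ₗ B) ∘ₗ C) = LinearMap.trace ℝ V ((C ∘ₗ C) ∘ₗ B) := by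
      have := LinearMap.trace_mul_comm ℝ (C ∘ₗ B) C
      have h3 := LinearMap.trace_mul_comm ℝ C (C ∘ₗ B)
      calc LinearMap.trace ℝ V ((C ∘ₗ B) ∘ₗ C) = LinearMap.trace ℝ V ((C ∘ₗ B) * C) := rfl
        _ = LinearMap.trace ℝ V (C * (C ∘ₗ B)) := LinearMap.trace_mul_comm ℝ _ _
        _ = LinearMap.trace ℝ V ((C ∘ₗ C) ∘ₗ B) := by congr 1
    have h4 : C ∘ₗ B ∘ₗ C = (C ∘ₗ B) ∘ₗ C := by ext x; simp
    rw [h4, h2]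
    have h5 : LinearMap.trace ℝ V ((C ∘ₗ C) ∘ₗ B) = - LinearMap.trace ℝ V ((C ∘ₗ C) ∘ₗ B) := by
      conv_lhs => rw [show (C ∘ₗ C) ∘ₗ B = -(C ∘ₗ B ∘ₗ C) by rw [h1]; simp, map_neg, h4, h2]
    linarith
  -- C = 0
  have hC0 : C = 0 := by
    classical
    let b := stdOrthonormalBasis ℝ V
    have hterm : ∀ i, (0:ℝ) ≤ inner ℝ (b i) ((C ∘ₗ B ∘ₗ C) (b i)) := by
      intro i
      simp only [comp_apply]
      rw [← hCsym]
      rcases eq_or_ne (C (b i)) 0 with h | h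
      · simp [h]
      · exact le_of_lt (by simpa [real_inner_comm] using hBpos _ h)
    have hsum : ∑ i, (inner ℝ (b i) ((C ∘ₗ B ∘ₗ C) (b i)) : ℝ) = 0 := by
      rw [← trace_eq_sum_inner' b, htr]
    have hzero : ∀ i, (inner ℝ (b i) ((C ∘ₗ B ∘ₗ C) (b i)) : ℝ) = 0 := by
      intro i
      exact (Finset.sum_eq_zero_iff_of_nonneg (fun i _ => hterm i)).mp hsum i (Finset.mem_univ i)
    have hCb : ∀ i, C (b i) = 0 := by
      intro i
      by_contra h
      have := hBpos _ h
      have h2 := hzero i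
      simp only [comp_apply] at h2
      rw [← hCsym] at h2
      rw [real_inner_comm] at h2
      linarith
    apply b.toBasis.ext
    intro i
    simp [hCb i]
  -- A B = B A
  have hcomm : A ∘ₗ B = B ∘ₗ A := by
    have := sub_eq_zero.mp hC0
    exact this
  -- B (A J) = B (-B)
  have hBAJ : B ∘ₗ (A ∘ₗ J) = B ∘ₗ (-B) := by
    calc B ∘ₗ (A ∘ₗ J) = (B ∘ₗ A) ∘ₗ J := by ext x; simp
      _ = (A ∘ₗ B) ∘ₗ J := by rw [hcomm]
      _ = A ∘ₗ (B ∘ₗ J) := by ext x; simp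
      _ = A ∘ₗ A := by rw [hJ]
      _ = B ∘ₗ (-B) := by
          ext x
          have hx := congrArg (fun f => f x) hB2
          simp only [comp_apply, LinearMap.neg_apply] at hx ⊢
          rw [map_neg, hx]; simp
  have hAJ : A ∘ₗ J = -B := by
    ext x
    have hx := congrArg (fun f => f x) hBAJ
    simp only [comp_apply, LinearMap.neg_apply] at hx ⊢
    have : B ((A ∘ₗ J) x - (-B) x) = 0 := by
      rw [map_sub]; simp only [comp_apply, LinearMap.neg_apply] at hx ⊢; rw [hx]; simp
    have := hBinj _ this
    rwa [sub_eq_zero] at this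
  -- conclude
  have hfinal : B ∘ₗ (J ∘ₗ J) = B ∘ₗ (-LinearMap.id) := by
    calc B ∘ₗ (J ∘ₗ J) = (B ∘ₗ J) ∘ₗ J := by ext x; simp
      _ = A ∘ₗ J := by rw [hJ]
      _ = -B := hAJ
      _ = B ∘ₗ (-LinearMap.id) := by ext x; simp
  ext x
  have hx := congrArg (fun f => f x) hfinal
  simp only [comp_apply, LinearMap.neg_apply, id_apply] at hx ⊢
  exact sub_eq_zero.mp (hBinj _ (by rw [map_sub, hx, sub_self]))
end

section
/- With V, g₀, ω, A, B, J as in the Gromov construction, the bilinear form g defined by g(x, y) = ω(x, J y) is symmetric and positive definite, and J is an isometry for g: g(J x, J y) = g(x, y) for all x, y ∈ V. -/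
theorem gromov_metric_hermitian
    (V : Type*) [NormedAddCommGroup V] [InnerProductSpace ℝ V] [FiniteDimensional ℝ V]
    (ω : V →ₗ[ℝ] V →ₗ[ℝ] ℝ)
    (hskew : ∀ x y, ω x y = - ω y x)
    (hnd : ∀ x, (∀ y, ω x y = 0) → x = 0)
    (A B J : V →ₗ[ℝ] V)
    (hA : ∀ x y, (inner ℝ (A x) y : ℝ) = ω x y)
    (hBsa : ∀ x y, (inner ℝ (B x) y : ℝ) = (inner ℝ x (B y) : ℝ))
    (hBpos : ∀ x : V, x ≠ 0 → 0 < (inner ℝ (B x) x : ℝ))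
    (hB2 : B ∘ₗ B = -(A ∘ₗ A))
    (hJ : B ∘ₗ J = A)
    (g : V → V → ℝ)
    (hg : ∀ x y, g x y = ω x (J y)) :
    (∀ x y, g x y = g y x) ∧
      (∀ x : V, x ≠ 0 → 0 < g x x) ∧
      (∀ x y, g (J x) (J y) = g x y) := by
  have hB2' : ∀ x, B (B x) = - A (A x) := by
    intro x
    have := LinearMap.congr_fun hB2 x
    simpa using this
  have hBJ : ∀ x, B (J x) = A x := fun x => LinearMap.congr_fun hJ x
  have hAsk : ∀ x y, (inner ℝ (A x) y : ℝ) = - (inner ℝ x (A y) : ℝ) := by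
    intro x y
    rw [hA, hskew, ← hA, real_inner_comm]
  have hBker : ∀ x, B x = 0 → x = 0 := by
    intro x hx
    by_contra h
    have := hBpos x h
    rw [hx] at this
    simp at this
  have hBinj : Function.Injective B :=
    LinearMap.ker_eq_bot.mp (LinearMap.ker_eq_bot'.mpr hBker)
  -- M := AB - BA
  set M : V →ₗ[ℝ] V := A ∘ₗ B - B ∘ₗ A with hMdef
  have hMapp : ∀ x, M x = A (B x) - B (A x) := fun x => rfl
  have hMsym : M.IsSymmetric := by
    intro x y
    calc (inner ℝ (M x) y : ℝ) = inner ℝ (A (B x)) y - inner ℝ (B (A x)) y := by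
          rw [hMapp, inner_sub_left]
      _ = - inner ℝ (B x) (A y) - inner ℝ (A x) (B y) := by
          rw [hAsk (B x) y, hBsa (A x) y]
      _ = - inner ℝ x (B (A y)) + inner ℝ x (A (B y)) := by
          rw [hBsa x (A y), hAsk x (B y)]; ring
      _ = (inner ℝ x (M y) : ℝ) := by rw [hMapp, inner_sub_right]; ring
  have hanti : ∀ x, B (M x) = - M (B x) := by
    intro x
    rw [hMapp, hMapp, map_sub, hB2' (A x), hB2' x, map_neg]
    abel
  have hM0 : M = 0 := by
    set n := Module.finrank ℝ V with hn'
    have hn : Module.finrank ℝ V = n := rfl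
    set b := hMsym.eigenvectorBasis hn with hb
    apply b.toBasis.ext
    intro i
    have hev : M (b i) = hMsym.eigenvalues hn i • b i :=
      hMsym.apply_eigenvectorBasis hn i
    set μ := hMsym.eigenvalues hn i with hμ
    have hbne : (b i : V) ≠ 0 := b.toBasis.ne_zero i
    have hc : 0 < (inner ℝ (B (b i)) (b i) : ℝ) := hBpos _ hbne
    have hμ0 : μ = 0 := by
      by_contra hμne
      have h1 : (inner ℝ (B (M (b i))) (M (b i)) : ℝ)
          = μ ^ 2 * inner ℝ (B (b i)) (b i) := by
        rw [hev, map_smul, real_inner_smul_left, real_inner_smul_right]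
        ring
      have h2 : (inner ℝ (B (M (b i))) (M (b i)) : ℝ)
          = - (μ ^ 2 * inner ℝ (B (b i)) (b i)) := by
        have hev2 : M (M (b i)) = μ • μ • b i := by rw [hev, map_smul, hev]
        rw [hanti, inner_neg_left, hMsym (B (b i)) (M (b i)), hev2,
          real_inner_smul_right, real_inner_smul_right]
        ring
      have : μ ^ 2 * (inner ℝ (B (b i)) (b i) : ℝ) = 0 := by
        rw [h1] at h2; linarith
      have hμ2 : μ ^ 2 > 0 := by positivity
      nlinarith
    simp only [OrthonormalBasis.coe_toBasis, LinearMap.zero_apply]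
    rw [hev, hμ0, zero_smul]
  have hAB : ∀ x, A (B x) = B (A x) := by
    intro x
    have := LinearMap.congr_fun hM0 x
    rw [hMapp] at this
    simpa [sub_eq_zero] using this
  have hJJ : ∀ x, J (J x) = -x := by
    intro x
    apply hBinj
    apply hBinj
    rw [hBJ (J x)]
    have : B (A (J x)) = A (B (J x)) := (hAB (J x)).symm
    rw [this, hBJ x, map_neg, map_neg, hB2' x, neg_neg]
  have gω : ∀ x y, g x y = (inner ℝ (B (J x)) (J y) : ℝ) := by
    intro x y
    rw [hg, ← hA, hBJ]
  have hsymm : ∀ x y, g x y = g y x := by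
    intro x y
    rw [gω x y, gω y x, hBsa, hBJ y, real_inner_comm]
  refine ⟨hsymm, ?_, ?_⟩
  · intro x hx
    have hJx : J x ≠ 0 := by
      intro h
      apply hx
      have := hJJ x
      rw [h, map_zero] at this
      simpa using this.symm
    rw [gω]
    exact hBpos _ hJx
  · intro x y
    rw [hg (J x) (J y), hJJ y, map_neg, hskew (J x) y, neg_neg, ← hg y x,
      hsymm y x]
end

section
/- Let V be a finite-dimensional real inner product space with inner product g₀ and let ω be a nondegenerate alternating bilinear form. Suppose φ : V → V is a linear isometry of g₀ that also preserves ω (ω(φx, φy) = ω(x, y)). Then φ commutes with the Gromov almost complex structure J = B⁻¹A (where g₀(Ax,y) = ω(x,y), B = √(-A²)), and φ is an isometry of the associated metric g(x,y) = ω(x, Jy). -/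
open Module.End in
/-- Uniqueness of the positive-definite symmetric square root. -/
lemma pos_sqrt_unique
    {V : Type*} [NormedAddCommGroup V] [InnerProductSpace ℝ V] [FiniteDimensional ℝ V]
    (B C : V →ₗ[ℝ] V)
    (hBsym : B.IsSymmetric) (hCsym : C.IsSymmetric)
    (hBpos : ∀ x : V, x ≠ 0 → 0 < (inner ℝ (B x) x : ℝ))
    (hCpos : ∀ x : V, x ≠ 0 → 0 < (inner ℝ (C x) x : ℝ))
    (hsq : B ∘ₗ B = C ∘ₗ C) : B = C := by
  set D : V →ₗ[ℝ] V := B - C with hD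
  have hDsym : D.IsSymmetric := hBsym.sub hCsym
  have hkey : ∀ μ : ℝ, eigenspace D μ ≤ LinearMap.ker D := by
    intro μ v hv
    rw [mem_eigenspace_iff] at hv
    rcases eq_or_ne v 0 with rfl | hv0
    · simp
    rcases eq_or_ne μ 0 with rfl | hμ
    · simpa [LinearMap.mem_ker] using hv
    · exfalso
      -- B ∘ D + D ∘ C = 0
      have hBD : ∀ x, B (D x) + D (C x) = 0 := by
        intro x
        have := DFunLike.congr_fun hsq x
        simp only [LinearMap.coe_comp, Function.comp_apply] at this
        simp [hD, map_sub, LinearMap.sub_apply, this]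
      have h0 : (0:ℝ) = μ * (inner ℝ (B v) v + inner ℝ (C v) v) := by
        have h1 : (inner ℝ (B (D v)) v : ℝ) + inner ℝ (D (C v)) v = 0 := by
          rw [← inner_add_left, hBD v, inner_zero_left]
        rw [hv, map_smul] at h1
        have h2 : (inner ℝ (D (C v)) v : ℝ) = inner ℝ (C v) (D v) := hDsym (C v) v
        rw [h2, hv] at h1
        simp only [inner_smul_left, inner_smul_right, RCLike.conj_to_real,
          real_inner_smul_left] at h1 ⊢
        ring_nf
        ring_nf at h1
        linarith
      have hpos : 0 < (inner ℝ (B v) v : ℝ) + inner ℝ (C v) v :=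
        add_pos (hBpos v hv0) (hCpos v hv0)
      exact hμ (by
        rcases mul_eq_zero.mp h0.symm with h | h
        · exact h
        · exact absurd h (ne_of_gt hpos))
  have htop : (⨆ μ : ℝ, eigenspace D μ) = ⊤ := by
    have := hDsym.orthogonalComplement_iSup_eigenspaces_eq_bot
    rwa [Submodule.orthogonal_eq_bot_iff] at this
  have : (⊤ : Submodule ℝ V) ≤ LinearMap.ker D := htop ▸ iSup_le hkey
  have hD0 : D = 0 := by
    ext x
    simpa using LinearMap.mem_ker.mp (this Submodule.mem_top)
  have := sub_eq_zero.mp hD0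
  exact this

theorem gromov_J_natural
    (V : Type*) [NormedAddCommGroup V] [InnerProductSpace ℝ V] [FiniteDimensional ℝ V]
    (ω : V →ₗ[ℝ] V →ₗ[ℝ] ℝ)
    (hskew : ∀ x y, ω x y = - ω y x)
    (hnd : ∀ x, (∀ y, ω x y = 0) → x = 0)
    (A B J : V →ₗ[ℝ] V)
    (hA : ∀ x y, (inner ℝ (A x) y : ℝ) = ω x y)
    (hBsa : ∀ x y, (inner ℝ (B x) y : ℝ) = (inner ℝ x (B y) : ℝ))
    (hBpos : ∀ x : V, x ≠ 0 → 0 < (inner ℝ (B x) x : ℝ))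
    (hB2 : B ∘ₗ B = -(A ∘ₗ A))
    (hJ : B ∘ₗ J = A)
    (g : V → V → ℝ) (hg : ∀ x y, g x y = ω x (J y))
    (φ : V →ₗ[ℝ] V)
    (hφg₀ : ∀ x y, (inner ℝ (φ x) (φ y) : ℝ) = (inner ℝ x y : ℝ))
    (hφω : ∀ x y, ω (φ x) (φ y) = ω x y) :
    φ ∘ₗ J = J ∘ₗ φ ∧ ∀ x y, g (φ x) (φ y) = g x y := by
  -- φ is injective, hence bijective
  have hinj : Function.Injective φ := by
    intro x y hxy
    have : (inner ℝ (x - y) (x - y) : ℝ) = 0 := by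
      have := hφg₀ (x - y) (x - y)
      rw [map_sub, hxy, sub_self] at this
      simpa using this.symm
    exact sub_eq_zero.mp (inner_self_eq_zero.mp this)
  have hbij : Function.Bijective φ :=
    ⟨hinj, (LinearMap.injective_iff_surjective).mp hinj⟩
  set e := LinearEquiv.ofBijective φ hbij with he
  have heφ : ∀ x, e x = φ x := fun _ => rfl
  have hesymm : ∀ x, φ (e.symm x) = x := fun x => e.apply_symm_apply x
  -- A commutes with φ
  have hAφ : ∀ x, A (φ x) = φ (A x) := by
    intro x
    apply ext_inner_right ℝ
    intro z
    obtain ⟨y, rfl⟩ := hbij.2 z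
    rw [hA, hφω, hφg₀, hA]
  -- C := φ B φ⁻¹ equals B
  set C : V →ₗ[ℝ] V := φ ∘ₗ B ∘ₗ (e.symm : V →ₗ[ℝ] V) with hC
  have hCapp : ∀ x, C (φ x) = φ (B x) := by
    intro x
    simp only [hC, LinearMap.comp_apply, LinearEquiv.coe_coe]
    congr 1
    exact congrArg B (e.symm_apply_apply x)
  have hBsym : B.IsSymmetric := fun x y => hBsa x y
  have hCsym : C.IsSymmetric := by
    intro x y
    obtain ⟨u, rfl⟩ := hbij.2 x
    obtain ⟨v, rfl⟩ := hbij.2 y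
    rw [hCapp, hφg₀, hBsa, ← hφg₀ u (B v), ← hCapp]
  have hCpos : ∀ x : V, x ≠ 0 → 0 < (inner ℝ (C x) x : ℝ) := by
    intro x hx
    obtain ⟨u, rfl⟩ := hbij.2 x
    have hu : u ≠ 0 := fun h => hx (by rw [h, map_zero])
    rw [hCapp, hφg₀]
    exact hBpos u hu
  have hCsq : C ∘ₗ C = B ∘ₗ B := by
    apply LinearMap.ext
    intro z
    obtain ⟨x, rfl⟩ := hbij.2 z
    have h1 : C (C (φ x)) = φ (B (B x)) := by rw [hCapp, hCapp]
    have h2 : B (B (φ x)) = φ (B (B x)) := by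
      have hB2' : ∀ y, B (B y) = -(A (A y)) := by
        intro y
        have := DFunLike.congr_fun hB2 y
        simpa using this
      rw [hB2', hAφ, hAφ, hB2']
      simp
    simp only [LinearMap.comp_apply, h1, h2]
  have hBC : B = C := pos_sqrt_unique B C hBsym hCsym hBpos hCpos hCsq.symm
  -- hence B commutes with φ
  have hBφ : ∀ x, B (φ x) = φ (B x) := by
    intro x
    conv_lhs => rw [hBC]
    exact hCapp x
  -- B is injective
  have hBinj : Function.Injective B := by
    intro x y hxy
    by_contra h
    have hx : x - y ≠ 0 := sub_ne_zero.mpr h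
    have := hBpos (x - y) hx
    rw [map_sub, hxy, sub_self] at this
    simp at this
  -- J commutes with φ
  have hJφ : ∀ x, φ (J x) = J (φ x) := by
    intro x
    apply hBinj
    have hBJ : ∀ y, B (J y) = A y := fun y => DFunLike.congr_fun hJ y
    rw [hBJ, hBφ, hBJ, hAφ]
  constructor
  · apply LinearMap.ext
    intro x
    simpa using hJφ x
  · intro x y
    rw [hg, hg, ← hJφ, hφω]
end
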